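/- If G is a topological group that is k-Steinhaus for some k ≥ 1 (i.e., for every symmetric countably syndetic set S ⊆ G, the set S^k contains a nonempty open set), then every group homomorphism from G to a separable topological group H is continuous. -/

import Mathlib

open Pointwise

/-- Preimages of homomorphisms behave well with pointwise products. -/
lemma preimage_pow_subset {G H : Type*} [Group G] [Group H] (φ : G →* H)
    (A : Set H) : ∀ n : ℕ, 1 ≤ n → (φ ⁻¹' A) ^ n ⊆ φ ⁻¹' (A ^ n) := by
  intro n
  induction n with
  | zero => intro h; exact absurd h (by norm_num)
  | succ m ih =>
    intro _
    rcases Nat.eq_zero_or_pos m with hm | hm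
    · subst hm; simp
    · rw [pow_succ, pow_succ]
      intro x hx
      rcases hx with ⟨y, hy, z, hz, rfl⟩
      simp only [Set.mem_preimage, map_mul]
      exact Set.mul_mem_mul (ih hm hy) hz

/-- In a topological group, every neighborhood of 1 contains an open set `V`
containing 1 with `V ^ n ⊆ W`. -/
lemma exists_open_pow_subset {H : Type*} [Group H] [TopologicalSpace H]
    [IsTopologicalGroup H] (W : Set H) (hW : W ∈ nhds (1 : H)) (n : ℕ) :
    ∃ V : Set H, IsOpen V ∧ (1 : H) ∈ V ∧ V ^ n ⊆ W := by
  induction n generalizing W with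
  | zero =>
    exact ⟨Set.univ, isOpen_univ, trivial, by simpa using mem_of_mem_nhds hW⟩
  | succ m ih =>
    obtain ⟨U, Uo, hU1, hUU⟩ := exists_open_nhds_one_mul_subset hW
    obtain ⟨V, Vo, hV1, hVm⟩ := ih U (Uo.mem_nhds hU1)
    refine ⟨V ∩ U, Vo.inter Uo, ⟨hV1, hU1⟩, ?_⟩
    rw [pow_succ]
    intro x hx
    rcases hx with ⟨y, hy, z, hz, rfl⟩
    exact hUU (Set.mul_mem_mul (hVm ((Set.pow_subset_pow_left Set.inter_subset_left) hy))
      hz.2)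

/-- A topological group that is `k`-Steinhaus for some `k ≥ 1` has the automatic
continuity property: every homomorphism into a separable topological group is continuous. -/
theorem steinhaus_automatic_continuity {G H : Type*} [Group G] [TopologicalSpace G]
    [IsTopologicalGroup G] [Group H] [TopologicalSpace H] [IsTopologicalGroup H]
    [TopologicalSpace.SeparableSpace H]
    (k : ℕ) (hk : 1 ≤ k)
    (hSteinhaus : ∀ S : Set G, S⁻¹ = S →
      (∃ a : ℕ → G, ∀ g : G, ∃ n, g ∈ a n • S) →
      ∃ U : Set G, IsOpen U ∧ U.Nonempty ∧ U ⊆ S ^ k)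
    (φ : G →* H) : Continuous φ := by
  classical
  apply continuous_of_continuousAt_one φ
  rw [ContinuousAt, map_one, Filter.tendsto_def]
  intro W hW
  -- choose open symmetric V with V ^ (4k) ⊆ W
  obtain ⟨V₀, V₀o, hV₀1, hV₀⟩ := exists_open_pow_subset W hW (4 * k)
  set V : Set H := V₀ ∩ V₀⁻¹ with hVdef
  have Vo : IsOpen V := V₀o.inter V₀o.inv
  have hV1 : (1 : H) ∈ V := ⟨hV₀1, by simpa using hV₀1⟩
  have hVsymm : V⁻¹ = V := by
    simp [hVdef, Set.inter_comm, Set.inter_inv]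
  have hVsub : V ⊆ V₀ := Set.inter_subset_left
  -- the candidate syndetic set
  set S : Set G := φ ⁻¹' (V * V) with hSdef
  have hSsymm : S⁻¹ = S := by
    ext g
    simp only [hSdef, Set.mem_inv, Set.mem_preimage, map_inv]
    constructor
    · intro h
      have : ((φ g)⁻¹)⁻¹ ∈ (V * V)⁻¹ := Set.inv_mem_inv.2 h
      rw [mul_inv_rev, hVsymm] at this
      simpa using this
    · intro h
      have : (φ g)⁻¹ ∈ (V * V)⁻¹ := Set.inv_mem_inv.2 h
      rwa [mul_inv_rev, hVsymm] at this
  -- countable syndeticity via separability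
  have : Nonempty H := ⟨1⟩
  set d : ℕ → H := TopologicalSpace.denseSeq H with hd
  have hdense : DenseRange d := TopologicalSpace.denseRange_denseSeq H
  set a : ℕ → G := fun n => if h : ∃ g : G, φ g ∈ d n • V then h.choose else 1 with ha
  have hsynd : ∀ g : G, ∃ n, g ∈ a n • S := by
    intro g
    -- find n with d n ∈ φ g • V
    have hopen : IsOpen (φ g • V) := Vo.smul _
    have hne : (φ g • V).Nonempty := ⟨φ g, 1, hV1, mul_one _⟩
    obtain ⟨n, hn⟩ := hdense.exists_mem_open hopen hne
    obtain ⟨v, hv, hvn⟩ := hn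
    -- φ g ∈ d n • V
    have hgin : φ g ∈ d n • V := by
      refine ⟨v⁻¹, by rw [← hVsymm]; exact Set.inv_mem_inv.2 hv, ?_⟩
      simp only [smul_eq_mul] at hvn ⊢
      rw [← hvn]; group
    have hex : ∃ g' : G, φ g' ∈ d n • V := ⟨g, hgin⟩
    have han : φ (a n) ∈ d n • V := by
      rw [ha]; simp only [dif_pos hex]; exact hex.choose_spec
    refine ⟨n, (a n)⁻¹ * g, ?_, by simp only [smul_eq_mul]; group⟩
    rw [hSdef, Set.mem_preimage, map_mul, map_inv]
    obtain ⟨v₁, hv₁, hv₁e⟩ := han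
    obtain ⟨v₂, hv₂, hv₂e⟩ := hgin
    have : (φ (a n))⁻¹ * φ g = v₁⁻¹ * v₂ := by
      simp only [smul_eq_mul] at hv₁e hv₂e
      rw [← hv₁e, ← hv₂e]; group
    rw [this]
    exact Set.mul_mem_mul (by rw [← hVsymm]; exact Set.inv_mem_inv.2 hv₁) hv₂
  obtain ⟨U, Uo, ⟨u, hu⟩, hUS⟩ := hSteinhaus S hSsymm ⟨a, hsynd⟩
  -- S ^ k ⊆ φ ⁻¹' (V ^ (2k))
  have hSk : S ^ k ⊆ φ ⁻¹' (V ^ (2 * k)) := by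
    refine (preimage_pow_subset φ (V * V) k hk).trans ?_
    have : (V * V) ^ k = V ^ (2 * k) := by
      rw [← sq, ← pow_mul]
    rw [this]
  -- conclude: u⁻¹ • U is an open nhd of 1 inside φ ⁻¹' W
  have hsub : u⁻¹ • U ⊆ φ ⁻¹' W := by
    intro x hx
    obtain ⟨y, hy, rfl⟩ := hx
    have hu' : φ u ∈ V ^ (2 * k) := hSk (hUS hu)
    have hy' : φ y ∈ V ^ (2 * k) := hSk (hUS hy)
    have hinv : (φ u)⁻¹ ∈ V ^ (2 * k) := by
      have : (φ u)⁻¹ ∈ (V ^ (2 * k))⁻¹ := Set.inv_mem_inv.2 hu'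
      rwa [← inv_pow, hVsymm] at this
    have : φ (u⁻¹ • y) ∈ V ^ (2 * k) * V ^ (2 * k) := by
      simp only [smul_eq_mul, map_mul, map_inv]
      exact Set.mul_mem_mul hinv hy'
    rw [← pow_add] at this
    have h4 : 2 * k + 2 * k = 4 * k := by ring
    rw [h4] at this
    exact hV₀ (Set.pow_subset_pow_left hVsub this)
  have h1mem : (1 : G) ∈ u⁻¹ • U := ⟨u, hu, by simp only [smul_eq_mul]; group⟩
  exact Filter.mem_of_superset ((Uo.smul u⁻¹).mem_nhds h1mem) hsub
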